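/- For every natural number N ≥ 1 and all reals θ, φ, the operator S₁' = cos(2θ)·(σz ⊗ I₂^{⊗(N−1)}) + sin(2θ)·(cos φ · σx^{⊗N} + sin φ · σy ⊗ σx^{⊗(N−1)}) stabilizes the state |Ψ_φ^θ⟩ = cos θ |0^N⟩ + e^{iφ} sin θ |1^N⟩, i.e. S₁' |Ψ_φ^θ⟩ = |Ψ_φ^θ⟩. -/

import Mathlib

open Matrix Complex

noncomputable section

/-- Pauli X matrix. -/
def pX : Matrix (Fin 2) (Fin 2) ℂ := !![0, 1; 1, 0]

/-- Pauli Y matrix. -/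
def pY : Matrix (Fin 2) (Fin 2) ℂ := !![0, -Complex.I; Complex.I, 0]

/-- Pauli Z matrix. -/
def pZ : Matrix (Fin 2) (Fin 2) ℂ := !![1, 0; 0, -1]

/-- Kronecker product of a family of single-qubit operators, one for each of the `N` qubits. -/
def tensorVec (N : ℕ) (A : Fin N → Matrix (Fin 2) (Fin 2) ℂ) :
    Matrix (Fin N → Fin 2) (Fin N → Fin 2) ℂ :=
  Matrix.of fun b c => ∏ j, A j (b j) (c j)

/-- N-fold Kronecker (tensor) power of a single-qubit operator. -/
def tensorPow (N : ℕ) (A : Matrix (Fin 2) (Fin 2) ℂ) :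
    Matrix (Fin N → Fin 2) (Fin N → Fin 2) ℂ :=
  tensorVec N fun _ => A

/-- The all-zeros bit string, indexing `|0^N⟩`. -/
def zeros (N : ℕ) : Fin N → Fin 2 := fun _ => 0

/-- The all-ones bit string, indexing `|1^N⟩`. -/
def ones (N : ℕ) : Fin N → Fin 2 := fun _ => 1

/-- The state `|Ψ_φ^θ⟩ = cos θ |0^N⟩ + e^{iφ} sin θ |1^N⟩`. -/
def psiPhiTheta (N : ℕ) (φ θ : ℝ) : (Fin N → Fin 2) → ℂ := fun b =>
  (Real.cos θ : ℂ) * (if b = zeros N then 1 else 0)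
    + Complex.exp (Complex.I * φ) * (Real.sin θ : ℂ) * (if b = ones N then 1 else 0)

/-- The generalized stabilizer
`S₁' = cos(2θ)·σz⊗I^{⊗(N−1)} + sin(2θ)(cos φ·σx^{⊗N} + sin φ·σy⊗σx^{⊗(N−1)})`. -/
def S1' (N : ℕ) (θ φ : ℝ) : Matrix (Fin N → Fin 2) (Fin N → Fin 2) ℂ :=
  ((Real.cos (2 * θ) : ℝ) : ℂ) • tensorVec N (fun j => if (j : ℕ) = 0 then pZ else 1)
    + ((Real.sin (2 * θ) : ℝ) : ℂ) •
        (((Real.cos φ : ℝ) : ℂ) • tensorPow N pX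
          + ((Real.sin φ : ℝ) : ℂ) • tensorVec N (fun j => if (j : ℕ) = 0 then pY else pX))

lemma pZ0 (x : Fin 2) : pZ x 0 = if x = 0 then 1 else 0 := by fin_cases x <;> simp [pZ]
lemma pZ1 (x : Fin 2) : pZ x 1 = -if x = 1 then 1 else 0 := by fin_cases x <;> simp [pZ]
lemma pX0 (x : Fin 2) : pX x 0 = if x = 1 then 1 else 0 := by fin_cases x <;> simp [pX]
lemma pX1 (x : Fin 2) : pX x 1 = if x = 0 then 1 else 0 := by fin_cases x <;> simp [pX]
lemma pY0 (x : Fin 2) : pY x 0 = Complex.I * if x = 1 then 1 else 0 := by fin_cases x <;> simp [pY]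
lemma pY1 (x : Fin 2) : pY x 1 = -Complex.I * if x = 0 then 1 else 0 := by fin_cases x <;> simp [pY]

lemma prod_ind {M : ℕ} (p : Fin M → Prop) [DecidablePred p] :
    (∏ j, if p j then (1:ℂ) else 0) = if ∀ j, p j then 1 else 0 := by
  rw [Finset.prod_boole]; simp

lemma tvZ_zeros (M : ℕ) (b : Fin (M+1) → Fin 2) :
    tensorVec (M+1) (fun j => if (j : ℕ) = 0 then pZ else 1) b (zeros (M+1))
      = if b = zeros (M+1) then 1 else 0 := by
  show (∏ j, (if ((j : Fin (M+1)) : ℕ) = 0 then pZ else 1) (b j) (zeros (M+1) j)) = _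
  rw [Fin.prod_univ_succ]
  simp only [Fin.val_zero, Fin.val_succ, Nat.succ_ne_zero, if_true, if_false, ↓reduceIte,
    zeros, pZ0, Matrix.one_apply, prod_ind]
  by_cases h1 : b 0 = 0 <;> by_cases h2 : ∀ j : Fin M, b j.succ = 0 <;>
    simp [h1, h2, funext_iff, Fin.forall_fin_succ, zeros, ones]
    <;> (obtain ⟨j, hj⟩ := not_forall.mp h2; exact Finset.prod_eq_zero (Finset.mem_univ j) (if_neg hj))

lemma tvZ_ones (M : ℕ) (b : Fin (M+1) → Fin 2) :
    tensorVec (M+1) (fun j => if (j : ℕ) = 0 then pZ else 1) b (ones (M+1))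
      = -if b = ones (M+1) then 1 else 0 := by
  show (∏ j, (if ((j : Fin (M+1)) : ℕ) = 0 then pZ else 1) (b j) (ones (M+1) j)) = _
  rw [Fin.prod_univ_succ]
  simp only [Fin.val_zero, Fin.val_succ, Nat.succ_ne_zero, if_true, if_false, ↓reduceIte,
    ones, pZ1, Matrix.one_apply, prod_ind]
  by_cases h1 : b 0 = 1 <;> by_cases h2 : ∀ j : Fin M, b j.succ = 1 <;>
    simp [h1, h2, funext_iff, Fin.forall_fin_succ, zeros, ones]
    <;> (obtain ⟨j, hj⟩ := not_forall.mp h2; exact Finset.prod_eq_zero (Finset.mem_univ j) (if_neg hj))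

lemma tpX_zeros (M : ℕ) (b : Fin (M+1) → Fin 2) :
    tensorPow (M+1) pX b (zeros (M+1)) = if b = ones (M+1) then 1 else 0 := by
  show (∏ j : Fin (M+1), pX (b j) (zeros (M+1) j)) = _
  simp only [zeros, pX0, prod_ind]
  simp [funext_iff, ones]

lemma tpX_ones (M : ℕ) (b : Fin (M+1) → Fin 2) :
    tensorPow (M+1) pX b (ones (M+1)) = if b = zeros (M+1) then 1 else 0 := by
  show (∏ j : Fin (M+1), pX (b j) (ones (M+1) j)) = _
  simp only [ones, pX1, prod_ind]
  simp [funext_iff, zeros]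

lemma tvY_zeros (M : ℕ) (b : Fin (M+1) → Fin 2) :
    tensorVec (M+1) (fun j => if (j : ℕ) = 0 then pY else pX) b (zeros (M+1))
      = Complex.I * if b = ones (M+1) then 1 else 0 := by
  show (∏ j, (if ((j : Fin (M+1)) : ℕ) = 0 then pY else pX) (b j) (zeros (M+1) j)) = _
  rw [Fin.prod_univ_succ]
  simp only [Fin.val_zero, Fin.val_succ, Nat.succ_ne_zero, if_true, if_false, ↓reduceIte,
    zeros, pY0, pX0, prod_ind]
  by_cases h1 : b 0 = 1 <;> by_cases h2 : ∀ j : Fin M, b j.succ = 1 <;>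
    simp [h1, h2, funext_iff, Fin.forall_fin_succ, ones]

lemma tvY_ones (M : ℕ) (b : Fin (M+1) → Fin 2) :
    tensorVec (M+1) (fun j => if (j : ℕ) = 0 then pY else pX) b (ones (M+1))
      = -Complex.I * if b = zeros (M+1) then 1 else 0 := by
  show (∏ j, (if ((j : Fin (M+1)) : ℕ) = 0 then pY else pX) (b j) (ones (M+1) j)) = _
  rw [Fin.prod_univ_succ]
  simp only [Fin.val_zero, Fin.val_succ, Nat.succ_ne_zero, if_true, if_false, ↓reduceIte,
    ones, pY1, pX1, prod_ind]
  by_cases h1 : b 0 = 0 <;> by_cases h2 : ∀ j : Fin M, b j.succ = 0 <;>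
    simp [h1, h2, funext_iff, Fin.forall_fin_succ, zeros]

theorem S1'_stabilizes_psi (N : ℕ) (hN : 1 ≤ N) (θ φ : ℝ) :
    (S1' N θ φ).mulVec (psiPhiTheta N φ θ) = psiPhiTheta N φ θ := by
  obtain ⟨M, rfl⟩ : ∃ M, N = M + 1 := ⟨N - 1, (Nat.succ_pred_eq_of_pos hN).symm⟩
  funext b
  rw [mulVec, dotProduct]
  simp only [psiPhiTheta, mul_add, mul_ite, mul_one, mul_zero, ← mul_assoc]
  rw [Finset.sum_add_distrib]
  rw [Finset.sum_ite_eq' Finset.univ (zeros (M+1)), Finset.sum_ite_eq' Finset.univ (ones (M+1))]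
  simp only [Finset.mem_univ, if_true]
  simp only [S1', Matrix.add_apply, Matrix.smul_apply, smul_eq_mul,
    tvZ_zeros, tvZ_ones, tpX_zeros, tpX_ones, tvY_zeros, tvY_ones]
  rw [mul_comm Complex.I (φ:ℂ), Complex.exp_mul_I, ← Complex.ofReal_cos, ← Complex.ofReal_sin]
  have hne : zeros (M+1) ≠ ones (M+1) := by
    intro h; have := congrFun h 0; simp [zeros, ones] at this
  have hc : (Real.cos (2*θ) : ℂ) * Real.cos θ + Real.sin (2*θ) * Real.sin θ = Real.cos θ := by
    have : Real.cos (2*θ) * Real.cos θ + Real.sin (2*θ) * Real.sin θ = Real.cos θ := by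
      rw [← Real.cos_sub]; ring_nf
    exact_mod_cast this
  have hs : (Real.sin (2*θ) : ℂ) * Real.cos θ - Real.cos (2*θ) * Real.sin θ = Real.sin θ := by
    have : Real.sin (2*θ) * Real.cos θ - Real.cos (2*θ) * Real.sin θ = Real.sin θ := by
      rw [← Real.sin_sub]; ring_nf
    exact_mod_cast this
  have hp : (Real.cos φ : ℂ)^2 + (Real.sin φ : ℂ)^2 = 1 := by
    exact_mod_cast Real.cos_sq_add_sin_sq φ
  by_cases hz : b = zeros (M+1) <;> by_cases ho : b = ones (M+1) <;>
    simp only [hz, ho, if_true, if_false, if_neg hne, if_neg (Ne.symm hne)]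
  · exact absurd (hz ▸ ho) hne
  · linear_combination hc + ((Real.sin (2*θ) : ℂ) * Real.sin θ) * hp
      - ((Real.sin (2*θ) : ℂ) * Real.sin θ * (Real.sin φ : ℂ)^2) * Complex.I_sq
  · linear_combination ((Real.cos φ : ℂ) + (Real.sin φ : ℂ) * Complex.I) * hs
  · ring
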